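/- Let A, C, q ∈ ℂ with 0 < |q| < 1, and let (a_n)_{n≥0} be a sequence of complex numbers satisfying a_1 = a_0^2 + (A + C)·a_0 and (n+1)·a_{n+1} = A·q^n·a_n + Σ_{i+j=n} a_i·a_j + C·a_n for all n ≥ 1 (the sum over pairs (i,j) of nonnegative integers with i + j = n). If |a_0| ≤ 1, then |a_n| ≤ (|A| + |C| + 1)^n for all n ≥ 0. -/

import Mathlib

/-- If `0 < |q| < 1`, `(a n)` satisfies `a₁ = a₀² + (A+C) a₀` and
`(n+1) a_{n+1} = A qⁿ a_n + Σ_{i+j=n} a_i a_j + C a_n` for all `n ≥ 1`, and `|a₀| ≤ 1`,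
then `|a_n| ≤ (|A| + |C| + 1)ⁿ` for all `n`. -/
theorem stmt13 (A C q : ℂ) (hq0 : 0 < ‖q‖) (hq1 : ‖q‖ < 1)
    (a : ℕ → ℂ)
    (h1 : a 1 = (a 0) ^ 2 + (A + C) * a 0)
    (hrec : ∀ n : ℕ, 1 ≤ n →
      ((n : ℂ) + 1) * a (n + 1) =
        A * q ^ n * a n + (∑ p ∈ Finset.HasAntidiagonal.antidiagonal n, a p.1 * a p.2) + C * a n)
    (ha0 : ‖a 0‖ ≤ 1) :
    ∀ n : ℕ, ‖a n‖ ≤ (‖A‖ + ‖C‖ + 1) ^ n := by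
  set M := ‖A‖ + ‖C‖ + 1 with hMdef
  have hA0 : 0 ≤ ‖A‖ := norm_nonneg _
  have hC0 : 0 ≤ ‖C‖ := norm_nonneg _
  have hM1 : (1 : ℝ) ≤ M := by simp only [hMdef]; linarith
  have hM0 : (0 : ℝ) ≤ M := by linarith
  intro n
  induction n using Nat.strong_induction_on with
  | _ n ih =>
    match n, ih with
    | 0, _ => simpa using ha0
    | 1, ih =>
      rw [h1]
      have hb : ‖(a 0) ^ 2 + (A + C) * a 0‖
          ≤ ‖a 0‖ ^ 2 + (‖A‖ + ‖C‖) * ‖a 0‖ := by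
        calc ‖(a 0) ^ 2 + (A + C) * a 0‖
            ≤ ‖(a 0) ^ 2‖ + ‖(A + C) * a 0‖ :=
              norm_add_le _ _
          _ ≤ ‖a 0‖ ^ 2 + (‖A‖ + ‖C‖) * ‖a 0‖ := by
              rw [norm_pow, norm_mul]
              gcongr
              exact norm_add_le _ _
      have h0 : 0 ≤ ‖a 0‖ := norm_nonneg _
      calc ‖(a 0) ^ 2 + (A + C) * a 0‖
          ≤ ‖a 0‖ ^ 2 + (‖A‖ + ‖C‖) * ‖a 0‖ := hb
        _ ≤ 1 + (‖A‖ + ‖C‖) := by nlinarith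
        _ = M ^ 1 := by rw [pow_one]; simp only [hMdef]; ring
    | (m + 2), ih =>
      have hrec' := hrec (m + 1) (Nat.le_add_left 1 m)
      have hih : ∀ k, k ≤ m + 1 → ‖a k‖ ≤ M ^ k := fun k hk =>
        ih k (Nat.lt_succ_of_le hk)
      have ham : ‖a (m + 1)‖ ≤ M ^ (m + 1) := hih (m + 1) le_rfl
      have hsum : ‖∑ p ∈ Finset.HasAntidiagonal.antidiagonal (m + 1), a p.1 * a p.2‖
          ≤ ((m : ℝ) + 2) * M ^ (m + 1) := by
        calc ‖∑ p ∈ Finset.HasAntidiagonal.antidiagonal (m + 1), a p.1 * a p.2‖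
            ≤ ∑ p ∈ Finset.HasAntidiagonal.antidiagonal (m + 1), ‖a p.1 * a p.2‖ :=
              norm_sum_le _ _
          _ ≤ ∑ _p ∈ Finset.HasAntidiagonal.antidiagonal (m + 1), M ^ (m + 1) := by
              apply Finset.sum_le_sum
              intro p hp
              rw [Finset.HasAntidiagonal.mem_antidiagonal] at hp
              rw [norm_mul]
              calc ‖a p.1‖ * ‖a p.2‖
                  ≤ M ^ p.1 * M ^ p.2 := by
                    apply mul_le_mul (hih p.1 ?_) (hih p.2 ?_)
                      (norm_nonneg _) (pow_nonneg hM0 _)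
                    · omega
                    · omega
                _ = M ^ (m + 1) := by rw [← pow_add, hp]
          _ = ((m : ℝ) + 2) * M ^ (m + 1) := by
              rw [Finset.sum_const, Finset.Nat.card_antidiagonal, nsmul_eq_mul]
              push_cast; ring
      have hqpow : ‖q ^ (m + 1)‖ ≤ 1 := by
        rw [norm_pow]
        exact pow_le_one₀ (norm_nonneg _) (le_of_lt hq1)
      have hLHS : ‖((m + 1 : ℕ) : ℂ) + 1‖ = (m : ℝ) + 2 := by
        rw [show ((m + 1 : ℕ) : ℂ) + 1 = ((m + 2 : ℕ) : ℂ) by push_cast; ring,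
          Complex.norm_natCast]
        push_cast; ring
      have key : ((m : ℝ) + 2) * ‖a (m + 2)‖ ≤ ((m : ℝ) + 2) * M ^ (m + 2) := by
        have e1 : ((m : ℝ) + 2) * ‖a (m + 2)‖
            = ‖(((m + 1 : ℕ) : ℂ) + 1) * a (m + 1 + 1)‖ := by
          rw [norm_mul, hLHS]
        rw [e1, hrec']
        calc ‖A * q ^ (m + 1) * a (m + 1)
              + (∑ p ∈ Finset.HasAntidiagonal.antidiagonal (m + 1), a p.1 * a p.2) + C * a (m + 1)‖
            ≤ ‖A * q ^ (m + 1) * a (m + 1)‖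
              + ‖∑ p ∈ Finset.HasAntidiagonal.antidiagonal (m + 1), a p.1 * a p.2‖
              + ‖C * a (m + 1)‖ := by
              refine le_trans (norm_add_le _ _) ?_
              gcongr
              exact norm_add_le _ _
          _ ≤ ‖A‖ * 1 * M ^ (m + 1) + ((m : ℝ) + 2) * M ^ (m + 1)
              + ‖C‖ * M ^ (m + 1) := by
              rw [norm_mul, norm_mul, norm_mul]
              gcongr
          _ ≤ ((m : ℝ) + 2) * M ^ (m + 2) := by
              have hpow : (0 : ℝ) ≤ M ^ (m + 1) := pow_nonneg hM0 _
              have : M ^ (m + 2) = M * M ^ (m + 1) := by ring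
              rw [this]
              simp only [hMdef]
              nlinarith [mul_nonneg hA0 hpow, mul_nonneg hC0 hpow,
                mul_nonneg (mul_nonneg hA0 hC0) hpow,
                mul_nonneg (Nat.cast_nonneg (α := ℝ) m) hpow]
      have hpos : (0 : ℝ) < (m : ℝ) + 2 := by positivity
      exact le_of_mul_le_mul_left key hpos
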